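/- For r < n, the degree-1 part of the Gassner matrix g_n(A_{rn}) modulo J² is (t_n - 1)(e_{rr} - e_{nr}) + (t_r - 1)(e_{nn} - e_{rn}); consequently, the images of A_{1n},…,A_{n-1,n} in K¹/K² are ℤ-linearly independent, where K^i is the congruence subgroup of level J^i. -/

import Mathlib

/-- The Laurent polynomial ring `ℤ[t₁^{±1},…,t_n^{±1}]`, realized as the group ring
`ℤ[ℤⁿ]`. -/
abbrev LaurentMv (n : ℕ) : Type := AddMonoidAlgebra ℤ (Fin n →₀ ℤ)

/-- The variable `t_i` in `ℤ[t₁^{±1},…,t_n^{±1}]`. -/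
noncomputable def tvar {n : ℕ} (i : Fin n) : LaurentMv n :=
  AddMonoidAlgebra.single (Finsupp.single i 1) 1

/-- The augmentation map `ℤ[t₁^{±1},…,t_n^{±1}] → ℤ`, `t_i ↦ 1`. -/
noncomputable def aug (n : ℕ) : LaurentMv n →+* ℤ :=
  AddMonoidAlgebra.liftNCRingHom (RingHom.id ℤ) 1 (fun _ _ => Commute.one_right _)

/-- The augmentation ideal `J = ker(aug)` of `ℤ[t₁^{±1},…,t_n^{±1}]`. -/
noncomputable def augIdeal (n : ℕ) : Ideal (LaurentMv n) := RingHom.ker (aug n)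

/-- The unreduced Gassner matrix `G_n(A_{rs})`: the identity matrix except for the entries
`(r,r) = 1 - t_r + t_r t_s`, `(r,s) = t_r(1-t_r)`, `(s,r) = 1 - t_s`, `(s,s) = t_r`, and
`(k,r) = (1-t_k)(1-t_s)`, `(k,s) = (1-t_k)(t_r-1)` for `r < k < s`. -/
noncomputable def gassner (n : ℕ) (r s : Fin n) : Matrix (Fin n) (Fin n) (LaurentMv n) :=
  Matrix.of fun k l =>
    if k = r ∧ l = r then 1 - tvar r + tvar r * tvar s
    else if k = r ∧ l = s then tvar r * (1 - tvar r)
    else if k = s ∧ l = r then 1 - tvar s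
    else if k = s ∧ l = s then tvar r
    else if r < k ∧ k < s ∧ l = r then (1 - tvar k) * (1 - tvar s)
    else if r < k ∧ k < s ∧ l = s then (1 - tvar k) * (tvar r - 1)
    else if k = l then 1 else 0

open Matrix

lemma aug_single {n : ℕ} (a : Fin n →₀ ℤ) (m : ℤ) :
    aug n (AddMonoidAlgebra.single a m) = m := by
  simp [aug, AddMonoidAlgebra.liftNCRingHom]

lemma aug_tvar {n : ℕ} (i : Fin n) : aug n (tvar i) = 1 := by
  simp [tvar, aug_single]

noncomputable def der {n : ℕ} (i : Fin n) : LaurentMv n →+ ℤ :=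
  (Finsupp.liftAddHom (fun a : Fin n →₀ ℤ => AddMonoidHom.mulLeft (a i))).comp
    AddMonoidAlgebra.coeffAddEquiv.toAddMonoidHom

lemma der_single {n : ℕ} (i : Fin n) (a : Fin n →₀ ℤ) (m : ℤ) :
    der i (AddMonoidAlgebra.single a m) = a i * m :=
  Finsupp.liftAddHom_apply_single _ _ _

lemma der_mul {n : ℕ} (i : Fin n) (x y : LaurentMv n) :
    der i (x * y) = aug n x * der i y + der i x * aug n y := by
  induction x using AddMonoidAlgebra.induction_linear with
  | zero => simp
  | add f g hf hg => rw [add_mul]; simp only [map_add, hf, hg]; ring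
  | single a m =>
    induction y using AddMonoidAlgebra.induction_linear with
    | zero => simp
    | add f g hf hg => rw [mul_add]; simp only [map_add, hf, hg]; ring
    | single b k =>
      erw [AddMonoidAlgebra.single_mul_single]
      simp only [der_single, aug_single, Finsupp.add_apply]
      ring

lemma der_tvar {n : ℕ} (i j : Fin n) :
    der i (tvar j) = if j = i then 1 else 0 := by
  rw [tvar]; erw [der_single]; simp [Finsupp.single_apply]

lemma der_one {n : ℕ} (i : Fin n) : der i (1 : LaurentMv n) = 0 := by
  have : (1 : LaurentMv n) = AddMonoidAlgebra.single 0 1 := rfl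
  rw [this, der_single]; simp

lemma tvar_sub_one_mem {n : ℕ} (i : Fin n) : tvar i - 1 ∈ augIdeal n := by
  have : aug n (tvar i - 1) = 0 := by rw [map_sub, aug_tvar, _root_.map_one, sub_self]
  exact this

lemma mul_mem_sq {n : ℕ} {x y : LaurentMv n} (hx : x ∈ augIdeal n) (hy : y ∈ augIdeal n) :
    x * y ∈ augIdeal n ^ 2 := by
  rw [sq]; exact Ideal.mul_mem_mul hx hy

lemma sub_mul_mem_sq {n : ℕ} (i j : Fin n) :
    (tvar i - 1) * (tvar j - 1) ∈ augIdeal n ^ 2 :=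
  mul_mem_sq (tvar_sub_one_mem i) (tvar_sub_one_mem j)

lemma der_eq_zero_of_mem_sq {n : ℕ} (i : Fin n) {x : LaurentMv n}
    (h : x ∈ augIdeal n ^ 2) : der i x = 0 := by
  rw [sq] at h
  refine Submodule.mul_induction_on h ?_ ?_
  · intro a ha b hb
    have ha' : aug n a = 0 := ha
    have hb' : aug n b = 0 := hb
    rw [der_mul, ha', hb']; ring
  · intro a b h1 h2; rw [map_add, h1, h2, add_zero]

lemma mem_sq_of_eq {n : ℕ} {x : LaurentMv n} (i j : Fin n) (z : LaurentMv n)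
    (h : x = z * ((tvar i - 1) * (tvar j - 1))) : x ∈ augIdeal n ^ 2 :=
  h ▸ Ideal.mul_mem_left _ _ (sub_mul_mem_sq i j)

set_option maxHeartbeats 1000000 in
theorem part1 (n : ℕ) :
    (∀ r : Fin (n + 1), r ≠ Fin.last n → ∀ k l : Fin (n + 1),
      gassner (n + 1) r (Fin.last n) k l
          - (1 : Matrix (Fin (n + 1)) (Fin (n + 1)) (LaurentMv (n + 1))) k l
          - (((tvar (Fin.last n) - 1) •
              (Matrix.single r r (1 : LaurentMv (n + 1))
                - Matrix.single (Fin.last n) r 1)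
            + (tvar r - 1) •
              (Matrix.single (Fin.last n) (Fin.last n) (1 : LaurentMv (n + 1))
                - Matrix.single r (Fin.last n) 1)
              : Matrix (Fin (n + 1)) (Fin (n + 1)) (LaurentMv (n + 1))) k l)
        ∈ augIdeal (n + 1) ^ 2) := by
  intro r hr k l
  have hrs : r < Fin.last n := lt_of_le_of_ne (Fin.le_last r) hr
  have hsr : Fin.last n ≠ r := hrs.ne'
  simp only [gassner, Matrix.of_apply, Matrix.one_apply, Matrix.add_apply,
    Matrix.smul_apply, Matrix.sub_apply, Matrix.single, smul_eq_mul]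
  by_cases hkr : k = r
  · by_cases hlr : l = r
    · simp [hkr, hlr, hr, Ne.symm hr, hsr]
      exact mem_sq_of_eq r (Fin.last n) 1 (by ring)
    · by_cases hls : l = Fin.last n
      · simp [hkr, hls, hr, Ne.symm hr, hsr, lt_irrefl]
        exact mem_sq_of_eq r r (-1) (by ring)
      · simp [hkr, hr, Ne.symm hr, hsr, hlr, hls, Ne.symm hlr, Ne.symm hls]
  · by_cases hks : k = Fin.last n
    · by_cases hlr : l = r
      · simp [hks, hlr, hr, Ne.symm hr, hsr, lt_irrefl]
      · by_cases hls : l = Fin.last n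
        · simp [hks, hls, hr, Ne.symm hr, hsr, lt_irrefl]
        · simp [hks, hr, Ne.symm hr, hsr, hlr, hls, Ne.symm hlr, Ne.symm hls, lt_irrefl]
    · by_cases hmid : r < k ∧ k < Fin.last n
      · by_cases hlr : l = r
        · simp [hlr, hkr, hks, hmid.1, hmid.2, hr, Ne.symm hr, hsr, Ne.symm hkr, Ne.symm hks]
          exact mem_sq_of_eq k (Fin.last n) 1 (by ring)
        · by_cases hls : l = Fin.last n
          · simp [hls, hkr, hks, hmid.1, hmid.2, hr, Ne.symm hr, hsr, hlr,
              Ne.symm hkr, Ne.symm hks, Ne.symm hlr]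
            exact mem_sq_of_eq k r (-1) (by ring)
          · by_cases hkl : k = l
            · subst hkl
              simp [hkr, hks, hr, Ne.symm hr, hsr, Ne.symm hkr, Ne.symm hks]
            · simp [hkr, hks, hlr, hls, hkl, hr, Ne.symm hr, hsr,
                Ne.symm hkr, Ne.symm hks, Ne.symm hlr, Ne.symm hls, Ne.symm hkl]
      · rcases not_and_or.mp hmid with h | h
        · by_cases hkl : k = l
          · subst hkl
            simp [h, hkr, hks, hr, Ne.symm hr, hsr, Ne.symm hkr, Ne.symm hks]
          · simp [h, hkr, hks, hkl, hr, Ne.symm hr, hsr, Ne.symm hkr, Ne.symm hks, Ne.symm hkl]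
        · by_cases hkl : k = l
          · subst hkl
            simp [h, hkr, hks, hr, Ne.symm hr, hsr, Ne.symm hkr, Ne.symm hks]
          · simp [h, hkr, hks, hkl, hr, Ne.symm hr, hsr, Ne.symm hkr, Ne.symm hks, Ne.symm hkl]

set_option maxHeartbeats 1000000 in
theorem part2 (n : ℕ) :
    (∀ c : Fin (n + 1) → ℤ,
      (∀ k l : Fin (n + 1),
        (∑ r ∈ Finset.univ.erase (Fin.last n),
          c r • (gassner (n + 1) r (Fin.last n) k l
            - (1 : Matrix (Fin (n + 1)) (Fin (n + 1)) (LaurentMv (n + 1))) k l))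
          ∈ augIdeal (n + 1) ^ 2) →
      ∀ r : Fin (n + 1), r ≠ Fin.last n → c r = 0) := by
  intro c h r hr
  have hrs : r < Fin.last n := lt_of_le_of_ne (Fin.le_last r) hr
  have hsr : Fin.last n ≠ r := hrs.ne'
  have hz := der_eq_zero_of_mem_sq r (h r (Fin.last n))
  rw [map_sum] at hz
  rw [Finset.sum_eq_single r (fun b hb hbr => by
    have hbne : b ≠ Fin.last n := Finset.ne_of_mem_erase hb
    have e1 : gassner (n + 1) b (Fin.last n) r (Fin.last n)
        - (1 : Matrix (Fin (n + 1)) (Fin (n + 1)) (LaurentMv (n + 1))) r (Fin.last n)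
        = if b < r then (1 - tvar r) * (tvar b - 1) else 0 := by
      simp only [gassner, Matrix.of_apply, Matrix.one_apply]
      by_cases hb2 : b < r
      · simp [hb2, hrs, hr, hsr, Ne.symm hbr, Ne.symm hbne, hbne]
      · simp [hb2, hrs, hr, hsr, Ne.symm hbr, Ne.symm hbne, hbne]
    rw [e1]
    by_cases hb2 : b < r
    · rw [if_pos hb2, map_zsmul, der_mul]
      simp [aug_tvar, der_tvar, hbr]
    · rw [if_neg hb2]
      simp)
    (fun hrm => absurd (Finset.mem_erase.mpr ⟨hr, Finset.mem_univ r⟩) hrm)] at hz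
  have e2 : gassner (n + 1) r (Fin.last n) r (Fin.last n)
      - (1 : Matrix (Fin (n + 1)) (Fin (n + 1)) (LaurentMv (n + 1))) r (Fin.last n)
      = tvar r * (1 - tvar r) := by
    simp [gassner, Matrix.one_apply, hr, hsr]
  rw [e2, map_zsmul] at hz
  have e3 : der r (tvar r * (1 - tvar r)) = -1 := by
    rw [der_mul]
    simp [aug_tvar, der_tvar, der_one]
  rw [e3] at hz
  simpa using hz


/-- For `r < n+1 = ` last index, the degree-1 part of the Gassner matrix
`g(A_{r,last})` modulo `J²` is `(t_last-1)(e_{rr} - e_{last,r}) + (t_r-1)(e_{last,last}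
- e_{r,last})`; consequently the images of the `A_{r,last}` (for `r ≠ last`) in
`K¹/K² ≅ M_n(J/J²)` are `ℤ`-linearly independent. -/
theorem gassner_degree_one_part (n : ℕ) :
    (∀ r : Fin (n + 1), r ≠ Fin.last n → ∀ k l : Fin (n + 1),
      gassner (n + 1) r (Fin.last n) k l
          - (1 : Matrix (Fin (n + 1)) (Fin (n + 1)) (LaurentMv (n + 1))) k l
          - (((tvar (Fin.last n) - 1) •
              (Matrix.single r r (1 : LaurentMv (n + 1))
                - Matrix.single (Fin.last n) r 1)
            + (tvar r - 1) •
              (Matrix.single (Fin.last n) (Fin.last n) (1 : LaurentMv (n + 1))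
                - Matrix.single r (Fin.last n) 1)
              : Matrix (Fin (n + 1)) (Fin (n + 1)) (LaurentMv (n + 1))) k l)
        ∈ augIdeal (n + 1) ^ 2) ∧
    (∀ c : Fin (n + 1) → ℤ,
      (∀ k l : Fin (n + 1),
        (∑ r ∈ Finset.univ.erase (Fin.last n),
          c r • (gassner (n + 1) r (Fin.last n) k l
            - (1 : Matrix (Fin (n + 1)) (Fin (n + 1)) (LaurentMv (n + 1))) k l))
          ∈ augIdeal (n + 1) ^ 2) →
      ∀ r : Fin (n + 1), r ≠ Fin.last n → c r = 0) := by
  exact ⟨part1 n, part2 n⟩
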